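/- Let K^perf be the perfection of the local field K and R° = k[τ^{±1}] the twisted Laurent polynomial ring over the residue field k. Then the left R°-module K^perf/O_{K^perf} is free, with basis given by the residue classes [ξ_j] of elements ξ_j ∈ K of normalized valuation -j for all integers j > 0 not divisible by p. Moreover the natural map R° ⊗_R (K/O_K) → K^perf/O_{K^perf} is an isomorphism, where R = k[τ]. -/

import Mathlib

set_option synthInstance.maxHeartbeats 1000000
set_option maxHeartbeats 1000000


/-!
STATEMENT 7: Let `K = k((t)) = LaurentSeries k` be a local field of characteristic `p` with
finite residue field `k`, `Kperf = PerfectClosure K p` its perfection, and `R = k[τ]`,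
`R° = k[τ^{±1}]` the twisted (Laurent) polynomial rings.  Twisted Laurent polynomials are
recorded as `LaurentPolynomial k` acting via `ℤ`-indexed Frobenius powers (`zpow` of the
Frobenius automorphism of the perfect field `Kperf`).  The valuation ring
`O_{Kperf} ⊆ Kperf` is the set of `ξ` all of whose `p^m`-th powers that come from `K` come
from `O_K` (`orderTop ≥ 0`).  Claims: (i) `Kperf/O_{Kperf}` is a free left `R°`-module with
basis the classes `[ξ_j]` (`ξ_j ∈ K` of normalized valuation `-j`, `p ∤ j > 0`), expressed by
unique finite `R°`-coefficient representations modulo `O_{Kperf}`; (ii) the natural map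
`R° ⊗_R (K/O_K) → Kperf/O_{Kperf}` (sending `τ^{-n} ⊗ [z]` to `[z^{p^{-n}}]`) is an
isomorphism, expressed by its injectivity and surjectivity on such representatives.
-/

noncomputable section

variable (p : ℕ) [Fact p.Prime] (k : Type) [Field k] [Fintype k] [CharP k p]

instance : CharP (LaurentSeries k) p :=
  charP_of_injective_ringHom (HahnSeries.C_injective (Γ := ℤ) (R := k)) p

/-- The perfection of `K = k((t))`. -/
abbrev Kperf := PerfectClosure (LaurentSeries k) p

/-- The embedding `K → Kperf`. -/
abbrev ιK : LaurentSeries k →+* Kperf p k := PerfectClosure.of (LaurentSeries k) p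

/-- The valuation ring of the perfection: `ξ` is integral iff whenever some `p^m`-th power of
`ξ` comes from `K`, it lies in `O_K`. -/
def Operf : Set (Kperf p k) :=
  {ξ | ∀ (m : ℕ) (z : LaurentSeries k), ξ ^ (p ^ m) = ιK p k z → 0 ≤ z.orderTop}

/-- Inverse Frobenius iterated `n` times on the perfection. -/
def frI (n : ℕ) (ξ : Kperf p k) : Kperf p k :=
  (⇑(frobeniusEquiv (Kperf p k) p).symm)^[n] ξ

/-- Action of a twisted Laurent polynomial `∑ qᵢ τ^i` (`i ∈ ℤ`) on the perfection. -/
def twistedLaurentAct (q : LaurentPolynomial k) (ξ : Kperf p k) : Kperf p k :=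
  Finsupp.sum q.coeff fun i a => ιK p k (HahnSeries.C a) * ((frobeniusEquiv (Kperf p k) p ^ i) ξ)

/-! ### Auxiliary lemmas -/

set_option linter.unusedSectionVars false

open HahnSeries

section Aux

lemma symm_iter_pow_eq (R : Type*) [CommSemiring R] [ExpChar R p] [PerfectRing R p]
    (n : ℕ) (x : R) : ((⇑(frobeniusEquiv R p).symm)^[n] x) ^ (p ^ n) = x := by
  induction n generalizing x with
  | zero => simp
  | succ n ih =>
    rw [Function.iterate_succ_apply', pow_succ', pow_mul, frobeniusEquiv_symm_pow_p, ih]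

lemma frI_pow_eq (n : ℕ) (ξ : Kperf p k) : frI p k n ξ ^ (p ^ n) = ξ :=
  symm_iter_pow_eq p _ n ξ

lemma zpow_natCast_apply (n : ℕ) (ζ : Kperf p k) :
    ((frobeniusEquiv (Kperf p k) p ^ (n : ℤ)) ζ) = ζ ^ (p ^ n) := by
  rw [zpow_natCast, ← iterateFrobeniusEquiv_eq_pow, iterateFrobeniusEquiv_def]

lemma zpow_pow_apply (i : ℤ) (M : ℕ) (ζ : Kperf p k) :
    ((frobeniusEquiv (Kperf p k) p ^ i) ζ) ^ (p ^ M)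
      = (frobeniusEquiv (Kperf p k) p ^ (i + M)) ζ := by
  rw [← zpow_natCast_apply, add_comm, zpow_add]; rfl

lemma iK_injective : Function.Injective (ιK p k) := (ιK p k).injective

lemma zpow_toNat_apply (i : ℤ) (hi : 0 ≤ i) (ζ : Kperf p k) :
    ((frobeniusEquiv (Kperf p k) p ^ i) ζ) = ζ ^ (p ^ i.toNat) := by
  rw [← zpow_natCast_apply, Int.toNat_of_nonneg hi]

lemma exists_level (ξ : Kperf p k) : ∃ (n : ℕ) (x : LaurentSeries k), ξ ^ (p ^ n) = ιK p k x := by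
  obtain ⟨⟨n, x⟩, rfl⟩ := PerfectClosure.mk_surjective (K := LaurentSeries k) (p := p) ξ
  refine ⟨n, x, ?_⟩
  rw [PerfectClosure.mk_pow, PerfectClosure.of_apply, PerfectClosure.eq_iff]
  simp [iterate_frobenius]

lemma pow_p_injective (n : ℕ) : Function.Injective (fun ξ : Kperf p k => ξ ^ (p ^ n)) := by
  intro a b h
  simpa [iterate_frobenius] using
    (frobenius_inj (Kperf p k) p).iterate n (by simpa [iterate_frobenius] using h)

lemma mem_Operf_iff {n : ℕ} {x : LaurentSeries k} {ζ : Kperf p k}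
    (h : ζ ^ (p ^ n) = ιK p k x) : ζ ∈ Operf p k ↔ 0 ≤ x.orderTop := by
  constructor
  · exact fun H => H n x h
  · intro hx m z hz
    have hpow : x ^ (p ^ m) = z ^ (p ^ n) := by
      apply iK_injective p k
      rw [map_pow, map_pow, ← h, ← hz, ← pow_mul, ← pow_mul, mul_comm]
    rcases eq_or_ne z 0 with rfl | hz0
    · simp
    have hx0 : x ≠ 0 := by
      intro h0
      apply pow_ne_zero (p ^ n) hz0
      rw [← hpow, h0, zero_pow (pow_ne_zero _ (Fact.out (p := p.Prime)).ne_zero)]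
    rw [HahnSeries.zero_le_orderTop_iff] at hx ⊢
    have := congrArg HahnSeries.order hpow
    rw [HahnSeries.order_pow, HahnSeries.order_pow, nsmul_eq_mul, nsmul_eq_mul] at this
    have hp0 : (0:ℤ) < (p:ℤ) := by exact_mod_cast (Fact.out (p := p.Prime)).pos
    have hppos : (0:ℤ) < (p:ℤ) ^ n := pow_pos hp0 n
    have hmpos : (0:ℤ) < (p:ℤ) ^ m := pow_pos hp0 m
    push_cast at this
    nlinarith [mul_nonneg hmpos.le hx]

lemma zero_mem_Operf : (0 : Kperf p k) ∈ Operf p k := by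
  intro m z hz
  have : z = 0 := by
    apply iK_injective p k
    rw [← hz, map_zero, zero_pow (pow_ne_zero _ (Fact.out (p := p.Prime)).ne_zero)]
  simp [this]

lemma sub_mem_Operf {a b : Kperf p k} (ha : a ∈ Operf p k) (hb : b ∈ Operf p k) :
    a - b ∈ Operf p k := by
  obtain ⟨n, x, hx⟩ := exists_level p k a
  obtain ⟨m, y, hy⟩ := exists_level p k b
  have hxx : a ^ (p ^ (n + m)) = ιK p k (x ^ (p ^ m)) := by
    rw [_root_.pow_add, pow_mul, hx, map_pow]
  have hyy : b ^ (p ^ (n + m)) = ιK p k (y ^ (p ^ n)) := by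
    rw [_root_.pow_add, mul_comm, pow_mul, hy, map_pow]
  have hsub : (a - b) ^ (p ^ (n + m)) = ιK p k (x ^ (p ^ m) - y ^ (p ^ n)) := by
    rw [sub_pow_expChar_pow, hxx, hyy, map_sub]
  rw [mem_Operf_iff p k hsub]
  have hxo : 0 ≤ (x ^ (p ^ m) : LaurentSeries k).orderTop := by
    have h0 : 0 ≤ x.orderTop := (mem_Operf_iff p k hx).1 ha
    rcases eq_or_ne x 0 with rfl | hx0
    · simp [zero_pow (pow_ne_zero _ (Fact.out (p := p.Prime)).ne_zero)]
    rw [HahnSeries.zero_le_orderTop_iff] at h0 ⊢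
    rw [HahnSeries.order_pow]
    positivity
  have hyo : 0 ≤ (y ^ (p ^ n) : LaurentSeries k).orderTop := by
    have h0 : 0 ≤ y.orderTop := (mem_Operf_iff p k hy).1 hb
    rcases eq_or_ne y 0 with rfl | hy0
    · simp [zero_pow (pow_ne_zero _ (Fact.out (p := p.Prime)).ne_zero)]
    rw [HahnSeries.zero_le_orderTop_iff] at h0 ⊢
    rw [HahnSeries.order_pow]
    positivity
  calc (0 : WithTop ℤ) ≤ min (x ^ (p ^ m) : LaurentSeries k).orderTop
        (-(y ^ (p ^ n)) : LaurentSeries k).orderTop := by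
        rw [HahnSeries.orderTop_neg]; exact le_min hxo hyo
    _ ≤ _ := by
        rw [sub_eq_add_neg]
        exact HahnSeries.min_orderTop_le_orderTop_add

lemma lc_pow (x : HahnSeries ℤ k) (m : ℕ) :
    (x ^ m).leadingCoeff = x.leadingCoeff ^ m := by
  induction m with
  | zero => simp [leadingCoeff_one]
  | succ m ih =>
    rcases eq_or_ne x 0 with rfl | hx
    · simp [zero_pow, leadingCoeff_zero]
    have hxm : x ^ m ≠ 0 := pow_ne_zero _ hx
    rw [pow_succ, leadingCoeff_eq, order_mul hxm hx, coeff_mul_order_add_order, ih, pow_succ]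

lemma pow_mul_inj {j j' e e' : ℕ} (hj : ¬ p ∣ j) (hj' : ¬ p ∣ j')
    (h0 : 0 < j) (h0' : 0 < j') (h : j * p ^ e = j' * p ^ e') : j = j' ∧ e = e' := by
  have hp : p.Prime := Fact.out
  have he : e = e' := by
    have h1 := congrArg (fun n => n.factorization p) h
    simp only [Nat.factorization_mul h0.ne' (pow_ne_zero _ hp.ne_zero),
      Nat.factorization_mul h0'.ne' (pow_ne_zero _ hp.ne_zero), Finsupp.add_apply,
      hp.factorization_pow, Finsupp.single_eq_same,
      Nat.factorization_eq_zero_of_not_dvd hj, Nat.factorization_eq_zero_of_not_dvd hj'] at h1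
    omega
  subst he
  exact ⟨Nat.eq_of_mul_eq_mul_right (pow_pos hp.pos e) h, rfl⟩

end Aux

/-! ### Lemmas about the twisted action -/

section Act

lemma act_zero (ζ : Kperf p k) : twistedLaurentAct p k 0 ζ = 0 :=
  Finsupp.sum_zero_index

lemma act_add (q₁ q₂ : LaurentPolynomial k) (ζ : Kperf p k) :
    twistedLaurentAct p k (q₁ + q₂) ζ
      = twistedLaurentAct p k q₁ ζ + twistedLaurentAct p k q₂ ζ :=
  Finsupp.sum_add_index' (fun i => by simp) (fun i a b => by
    simp only [map_add, add_mul])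

lemma act_single (i : ℤ) (a : k) (ζ : Kperf p k) :
    twistedLaurentAct p k (AddMonoidAlgebra.single i a) ζ
      = ιK p k (HahnSeries.C a) * ((frobeniusEquiv (Kperf p k) p ^ i) ζ) :=
  Finsupp.sum_single_index (by simp)

variable (ξ : {j : ℕ // 0 < j ∧ ¬ p ∣ j} → LaurentSeries k)

/-- The sum appearing in the statement, as an additive monoid hom in the coefficients. -/
def SHom : ({j : ℕ // 0 < j ∧ ¬ p ∣ j} →₀ LaurentPolynomial k) →+ Kperf p k :=
  AddMonoidHom.mk' (fun c => c.sum fun j q => twistedLaurentAct p k q (ιK p k (ξ j)))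
    (fun c₁ c₂ => Finsupp.sum_add_index' (fun j => act_zero p k _) (fun j q₁ q₂ => act_add p k _ _ _))

lemma SHom_apply (c : {j : ℕ // 0 < j ∧ ¬ p ∣ j} →₀ LaurentPolynomial k) :
    SHom p k ξ c = c.sum fun j q => twistedLaurentAct p k q (ιK p k (ξ j)) := rfl

/-- Key computation: `p^M`-th power of the action on `ιK x` lands in `K`. -/
lemma act_pow_eq (q : LaurentPolynomial k) (x : LaurentSeries k) (M : ℕ)
    (hq : ∀ i ∈ q.coeff.support, (0:ℤ) ≤ i + M) :
    (twistedLaurentAct p k q (ιK p k x)) ^ (p ^ M)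
      = ιK p k (q.coeff.sum fun i a => HahnSeries.C (a ^ (p ^ M)) * x ^ (p ^ (i + M).toNat)) := by
  rw [twistedLaurentAct, Finsupp.sum, Finsupp.sum, sum_pow_char_pow, map_sum]
  refine Finset.sum_congr rfl fun i hi => ?_
  have h0 : (0:ℤ) ≤ i + M := hq i hi
  rw [mul_pow, zpow_pow_apply, zpow_toNat_apply p k _ h0,
    ← map_pow (ιK p k), ← map_pow (ιK p k), ← map_mul,
    ← map_pow (HahnSeries.C (R := k) (Γ := ℤ))]

end Act

/-! ### The two K-level key lemmas -/

section KLevel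

variable (ξ : {j : ℕ // 0 < j ∧ ¬ p ∣ j} → LaurentSeries k)
  (hξ : ∀ j, (ξ j).orderTop = ((-(j.1 : ℤ) : ℤ) : WithTop ℤ))

include hξ

lemma xi_ne_zero (j) : ξ j ≠ 0 := by
  rw [← orderTop_ne_top, hξ j]; exact WithTop.coe_ne_top

lemma xi_order (j) : (ξ j).order = -(j.1 : ℤ) := by
  have h := order_eq_orderTop_of_ne_zero (xi_ne_zero p k ξ hξ j)
  rw [hξ j] at h
  exact_mod_cast h

/-- order and leading coefficient of the basic terms `C b * ξ_j ^ (p ^ e)` -/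
lemma term_spec (j) {b : k} (hb : b ≠ 0) (e : ℕ) :
    HahnSeries.C b * (ξ j) ^ (p ^ e) ≠ 0 ∧
    (HahnSeries.C b * (ξ j) ^ (p ^ e)).order = -((j.1 * p ^ e : ℕ) : ℤ) ∧
    (HahnSeries.C b * (ξ j) ^ (p ^ e)).coeff (-((j.1 * p ^ e : ℕ) : ℤ))
      = b * (ξ j).leadingCoeff ^ (p ^ e) := by
  have hx0 : ξ j ≠ 0 := xi_ne_zero p k ξ hξ j
  have hT0 : (ξ j) ^ (p ^ e) ≠ 0 := pow_ne_zero _ hx0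
  have hCb : (HahnSeries.C b : HahnSeries ℤ k) ≠ 0 := C_ne_zero hb
  have hCbord : (HahnSeries.C b : HahnSeries ℤ k).order = 0 := by
    show (single (0:ℤ) b).order = 0
    exact order_single hb
  have hTord : ((ξ j) ^ (p ^ e)).order = -((j.1 * p ^ e : ℕ) : ℤ) := by
    rw [order_pow, xi_order p k ξ hξ j, nsmul_eq_mul]
    push_cast
    ring
  refine ⟨mul_ne_zero hCb hT0, ?_, ?_⟩
  · rw [order_mul hCb hT0, hCbord, hTord, zero_add]
  · have := coeff_mul_order_add_order (HahnSeries.C b) ((ξ j) ^ (p ^ e))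
    rw [hCbord, hTord, zero_add] at this
    rw [this, lc_pow]
    congr 1
    show (single (0:ℤ) b).leadingCoeff = b
    exact leadingCoeff_of_single

lemma exists_approx_aux : ∀ n : ℕ, ∀ y : LaurentSeries k,
    ((-(n:ℤ) : ℤ) : WithTop ℤ) ≤ y.orderTop →
    ∃ b : ({j : ℕ // 0 < j ∧ ¬ p ∣ j} × ℕ) →₀ k,
      0 ≤ (y - b.sum fun js a => HahnSeries.C a * (ξ js.1) ^ (p ^ js.2)).orderTop := by
  intro n
  induction n with
  | zero =>
    intro y hy
    exact ⟨0, by simpa using hy⟩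
  | succ n IH =>
    intro y hy
    by_cases h : ((-(n:ℤ) : ℤ) : WithTop ℤ) ≤ y.orderTop
    · exact IH y h
    push_neg at h
    have hy0 : y ≠ 0 := by
      rw [← orderTop_ne_top]; intro ht; rw [ht] at h; exact (not_top_lt h).elim
    have hyo : ((y.order : ℤ) : WithTop ℤ) = y.orderTop := order_eq_orderTop_of_ne_zero hy0
    have h1 : -(↑(n+1):ℤ) ≤ y.order := by
      rw [← hyo] at hy; exact_mod_cast hy
    have h2 : y.order < -(n:ℤ) := by
      rw [← hyo] at h; exact_mod_cast h
    have horder : y.order = -(↑(n+1):ℤ) := by omega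
    have hp : p.Prime := Fact.out
    set m := n + 1 with hm
    set e := m.factorization p with he
    set j := m / p ^ e with hj
    have hfact : p ^ e * j = m := Nat.ordProj_mul_ordCompl_eq_self m p
    have hj0 : 0 < j := Nat.ordCompl_pos p (by omega)
    have hjnd : ¬ p ∣ j := Nat.not_dvd_ordCompl hp (by omega)
    set jJ : {j : ℕ // 0 < j ∧ ¬ p ∣ j} := ⟨j, hj0, hjnd⟩ with hjJ
    have hmval : ((jJ.1 * p ^ e : ℕ) : ℤ) = (m : ℤ) := by
      show ((j * p ^ e : ℕ) : ℤ) = (m : ℤ)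
      rw [mul_comm, hfact]
    have hlcT : (ξ jJ).leadingCoeff ^ (p ^ e) ≠ 0 :=
      pow_ne_zero _ (leadingCoeff_ne_zero.mpr (xi_ne_zero p k ξ hξ jJ))
    set a := y.coeff (-(m:ℤ)) / ((ξ jJ).leadingCoeff ^ (p ^ e)) with ha
    have hca : y.coeff (-(m:ℤ)) ≠ 0 := by
      have := coeff_order_eq_zero.not.mpr hy0
      rwa [horder] at this
    have ha0 : a ≠ 0 := div_ne_zero hca hlcT
    obtain ⟨hCaT0, hCaTord, hCaTc⟩ := term_spec p k ξ hξ jJ ha0 e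
    rw [hmval] at hCaTord hCaTc
    have hCaTcoeff : (HahnSeries.C a * (ξ jJ) ^ (p ^ e)).coeff (-(m:ℤ)) = y.coeff (-(m:ℤ)) := by
      rw [hCaTc, ha, div_mul_cancel₀ _ hlcT]
    set y' := y - HahnSeries.C a * (ξ jJ) ^ (p ^ e) with hy'
    have hy'coeff : y'.coeff (-(m:ℤ)) = 0 := by
      rw [hy', coeff_sub, hCaTcoeff, sub_self]
    have hy'top : ((-(m:ℤ) : ℤ) : WithTop ℤ) ≤ y'.orderTop := by
      have hmin : ((-(m:ℤ) : ℤ) : WithTop ℤ)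
          ≤ min y.orderTop (-(HahnSeries.C a * (ξ jJ) ^ (p ^ e))).orderTop := by
        rw [orderTop_neg, ← hyo, ← order_eq_orderTop_of_ne_zero hCaT0, horder, hCaTord]
        simp
      calc ((-(m:ℤ) : ℤ) : WithTop ℤ) ≤ _ := hmin
        _ ≤ y'.orderTop := by rw [hy', sub_eq_add_neg]; exact min_orderTop_le_orderTop_add
    have hy'n : ((-(n:ℤ) : ℤ) : WithTop ℤ) ≤ y'.orderTop := by
      rcases eq_or_ne y' 0 with h0 | h0
      · rw [h0, orderTop_zero]; exact le_top
      have hoy' : ((y'.order : ℤ) : WithTop ℤ) = y'.orderTop := order_eq_orderTop_of_ne_zero h0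
      rw [← hoy'] at hy'top ⊢
      have hge : -(m:ℤ) ≤ y'.order := by exact_mod_cast hy'top
      have hne : y'.order ≠ -(m:ℤ) := by
        intro hc
        exact coeff_order_eq_zero.not.mpr h0 (hc ▸ hy'coeff)
      have : -(n:ℤ) ≤ y'.order := by omega
      exact_mod_cast this
    obtain ⟨b', hb'⟩ := IH y' hy'n
    refine ⟨b' + Finsupp.single (jJ, e) a, ?_⟩
    have hsum : ((b' + Finsupp.single (jJ, e) a).sum
          fun js a => HahnSeries.C a * (ξ js.1) ^ (p ^ js.2))
        = (b'.sum fun js a => HahnSeries.C a * (ξ js.1) ^ (p ^ js.2))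
          + HahnSeries.C a * (ξ jJ) ^ (p ^ e) := by
      rw [Finsupp.sum_add_index' (fun js => by simp) (fun js a b => by rw [map_add, add_mul]),
        Finsupp.sum_single_index (by simp)]
    rw [hsum]
    have hre : y - ((b'.sum fun js a => HahnSeries.C a * (ξ js.1) ^ (p ^ js.2))
        + HahnSeries.C a * (ξ jJ) ^ (p ^ e))
        = y' - b'.sum fun js a => HahnSeries.C a * (ξ js.1) ^ (p ^ js.2) := by
      rw [hy']; ring
    rw [hre]
    exact hb'

lemma exists_approx (y : LaurentSeries k) :
    ∃ b : ({j : ℕ // 0 < j ∧ ¬ p ∣ j} × ℕ) →₀ k,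
      0 ≤ (y - b.sum fun js a => HahnSeries.C a * (ξ js.1) ^ (p ^ js.2)).orderTop := by
  rcases eq_or_ne y 0 with rfl | hy0
  · exact exists_approx_aux p k ξ hξ 0 0 (by simp)
  refine exists_approx_aux p k ξ hξ (-(y.order)).toNat y ?_
  rw [← order_eq_orderTop_of_ne_zero hy0]
  have : -((-(y.order)).toNat : ℤ) ≤ y.order := by
    have := Int.self_le_toNat (-(y.order))
    omega
  exact_mod_cast this

/-- Uniqueness: a combination lying in `Operf` must be trivial. -/
lemma S_mem_imp_zero (d : {j : ℕ // 0 < j ∧ ¬ p ∣ j} →₀ LaurentPolynomial k)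
    (hd : SHom p k ξ d ∈ Operf p k) : d = 0 := by
  by_contra hne
  have hp : p.Prime := Fact.out
  set M := d.support.sup (fun j => (d j).coeff.support.sup fun i => (-i).toNat) with hM
  have hMle : ∀ j ∈ d.support, ∀ i ∈ (d j).coeff.support, (0:ℤ) ≤ i + M := by
    intro j hj i hi
    have h1 : (-i).toNat ≤ (d j).coeff.support.sup (fun i => (-i).toNat) :=
      Finset.le_sup (f := fun i => (-i).toNat) hi
    have h2 : (d j).coeff.support.sup (fun i => (-i).toNat) ≤ M :=
      Finset.le_sup (f := fun j => (d j).coeff.support.sup fun i => (-i).toNat) hj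
    have := Int.self_le_toNat (-i)
    omega
  -- compute the p^M-th power
  have hSd : (SHom p k ξ d) ^ (p ^ M)
      = ιK p k (d.support.sum fun j =>
          ((d j).coeff.sum fun i a => HahnSeries.C (a ^ (p ^ M)) * (ξ j) ^ (p ^ (i + M).toNat))) := by
    rw [SHom_apply, Finsupp.sum, sum_pow_char_pow, map_sum]
    refine Finset.sum_congr rfl fun j hj => ?_
    exact act_pow_eq p k (d j) (ξ j) M (hMle j hj)
  set z := d.support.sum fun j =>
      ((d j).coeff.sum fun i a => HahnSeries.C (a ^ (p ^ M)) * (ξ j) ^ (p ^ (i + M).toNat)) with hz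
  have hzpos : 0 ≤ z.orderTop := (mem_Operf_iff p k hSd).1 hd
  -- find the maximal valuation pair
  set Pairs := d.support.sigma (fun j => (d j).coeff.support) with hPairs
  have hPne : Pairs.Nonempty := by
    rw [hPairs, Finset.sigma_nonempty]
    obtain ⟨j, hj⟩ := Finsupp.support_nonempty_iff.mpr hne
    exact ⟨j, hj, Finsupp.support_nonempty_iff.mpr (fun h => Finsupp.mem_support_iff.mp hj (AddMonoidAlgebra.coeff_injective h))⟩
  set val : (Σ _ : {j : ℕ // 0 < j ∧ ¬ p ∣ j}, ℤ) → ℕ :=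
    fun s => s.1.1 * p ^ ((s.2 + M).toNat) with hval
  obtain ⟨s₀, hs₀, hmax⟩ := Pairs.exists_max_image val hPne
  rw [hPairs, Finset.mem_sigma] at hs₀
  obtain ⟨hs₀1, hs₀2⟩ := hs₀
  -- the coefficient of z at -(val s₀) is nonzero
  have hvalpos : 0 < val s₀ := Nat.mul_pos s₀.1.2.1 (pow_pos hp.pos _)
  have hstrict : ∀ s ∈ Pairs, s ≠ s₀ → val s < val s₀ := by
    intro s hs hneq
    rcases lt_or_eq_of_le (hmax s hs) with h | h
    · exact h
    exfalso
    rw [hPairs, Finset.mem_sigma] at hs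
    have := pow_mul_inj p (j := s.1.1) (j' := s₀.1.1) s.1.2.2 s₀.1.2.2 s.1.2.1 s₀.1.2.1 h
    apply hneq
    have h1 : s.1 = s₀.1 := Subtype.ext this.1
    have h2 : s.2 + (M:ℤ) = s₀.2 + M := by
      have e1 := hMle s.1 hs.1 s.2 hs.2
      have e2 := hMle s₀.1 hs₀1 s₀.2 hs₀2
      omega
    have h2' : s.2 = s₀.2 := by omega
    cases s; cases s₀
    simp_all
  have hcoeff : z.coeff (-(val s₀ : ℤ)) ≠ 0 := by
    have ha₀ : (d s₀.1).coeff s₀.2 ≠ 0 := Finsupp.mem_support_iff.mp hs₀2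
    rw [hz, ← coeff.addMonoidHom_apply, map_sum]
    rw [Finset.sum_eq_single_of_mem s₀.1 hs₀1]
    · -- inner sum
      rw [Finsupp.sum, map_sum, Finset.sum_eq_single_of_mem s₀.2 hs₀2]
      · simp only [coeff.addMonoidHom_apply]
        obtain ⟨ht0, htord, htc⟩ :=
          term_spec p k ξ hξ s₀.1 (pow_ne_zero (p^M) ha₀) ((s₀.2 + M).toNat)
        rw [htc]
        exact mul_ne_zero (pow_ne_zero _ ha₀)
          (pow_ne_zero _ (leadingCoeff_ne_zero.mpr (xi_ne_zero p k ξ hξ s₀.1)))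
      · intro i hi hneq
        simp only [coeff.addMonoidHom_apply]
        have hai : (d s₀.1).coeff i ≠ 0 := Finsupp.mem_support_iff.mp hi
        obtain ⟨ht0, htord, htc⟩ :=
          term_spec p k ξ hξ s₀.1 (pow_ne_zero (p^M) hai) ((i + M).toNat)
        apply coeff_eq_zero_of_lt_order
        rw [htord]
        have : val ⟨s₀.1, i⟩ < val s₀ := by
          apply hstrict ⟨s₀.1, i⟩
          · rw [hPairs, Finset.mem_sigma]; exact ⟨hs₀1, hi⟩
          · intro hc
            apply hneq
            have := congrArg Sigma.snd hc
            simpa using this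
        simp only [hval] at this ⊢
        omega
    · intro j hj hneq
      rw [Finsupp.sum, map_sum]
      apply Finset.sum_eq_zero
      intro i hi
      simp only [coeff.addMonoidHom_apply]
      have hai : (d j).coeff i ≠ 0 := Finsupp.mem_support_iff.mp hi
      obtain ⟨ht0, htord, htc⟩ :=
        term_spec p k ξ hξ j (pow_ne_zero (p^M) hai) ((i + M).toNat)
      apply coeff_eq_zero_of_lt_order
      rw [htord]
      have : val ⟨j, i⟩ < val s₀ := by
        apply hstrict ⟨j, i⟩
        · rw [hPairs, Finset.mem_sigma]; exact ⟨hj, hi⟩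
        · intro hc
          exact hneq (congrArg (fun s => s.1) hc)
      simp only [hval] at this ⊢
      omega
  have horderle : z.orderTop ≤ ((-(val s₀ : ℤ) : ℤ) : WithTop ℤ) :=
    orderTop_le_of_coeff_ne_zero hcoeff
  have : (0 : WithTop ℤ) ≤ ((-(val s₀ : ℤ) : ℤ) : WithTop ℤ) := le_trans hzpos horderle
  have : (0:ℤ) ≤ -(val s₀ : ℤ) := by exact_mod_cast this
  omega

end KLevel

/-! ### The main theorem -/

theorem perfection_quotient_free_over_twisted_laurent
    (ξ : {j : ℕ // 0 < j ∧ ¬ p ∣ j} → LaurentSeries k)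
    (hξ : ∀ j, (ξ j).orderTop = ((-(j.1 : ℤ) : ℤ) : WithTop ℤ)) :
    (∀ m : Kperf p k,
      ∃! c : {j : ℕ // 0 < j ∧ ¬ p ∣ j} →₀ LaurentPolynomial k,
        (m - c.sum fun j q => twistedLaurentAct p k q (ιK p k (ξ j))) ∈ Operf p k) ∧
    (∀ (n : ℕ) (z : LaurentSeries k), frI p k n (ιK p k z) ∈ Operf p k → 0 ≤ z.orderTop) ∧
    (∀ m : Kperf p k, ∃ (n : ℕ) (z : LaurentSeries k),
        m - frI p k n (ιK p k z) ∈ Operf p k) := by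
  refine ⟨?_, ?_, ?_⟩
  · -- (i) free basis
    intro m
    obtain ⟨N, x, hX⟩ := exists_level p k m
    obtain ⟨b, hb⟩ := exists_approx p k ξ hξ x
    -- construct the coefficients
    set ρ : k → k := (⇑(frobeniusEquiv k p).symm)^[N] with hρ
    set c : {j : ℕ // 0 < j ∧ ¬ p ∣ j} →₀ LaurentPolynomial k :=
      b.sum fun js a => Finsupp.single js.1 (AddMonoidAlgebra.single ((js.2 : ℤ) - N) (ρ a)) with hc
    have hSc : (SHom p k ξ c) ^ (p ^ N)
        = ιK p k (b.sum fun js a => HahnSeries.C a * (ξ js.1) ^ (p ^ js.2)) := by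
      have h0 : SHom p k ξ c = b.sum fun js a =>
          SHom p k ξ (Finsupp.single js.1 (AddMonoidAlgebra.single ((js.2 : ℤ) - N) (ρ a))) := by
        rw [hc]; exact map_finsuppSum _ _ _
      rw [h0, Finsupp.sum, sum_pow_char_pow, Finsupp.sum, map_sum]
      refine Finset.sum_congr rfl fun js hjs => ?_
      rw [SHom_apply, Finsupp.sum_single_index
          (h := fun j q => twistedLaurentAct p k q (ιK p k (ξ j))) (act_zero p k _),
        act_single, mul_pow,
        zpow_pow_apply, sub_add_cancel, zpow_natCast_apply,
        ← map_pow (ιK p k), ← map_pow (ιK p k), ← map_mul,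
        ← map_pow (HahnSeries.C (R := k) (Γ := ℤ)), hρ, symm_iter_pow_eq p k N]
    have hmem : (m - SHom p k ξ c) ∈ Operf p k := by
      have hpow : (m - SHom p k ξ c) ^ (p ^ N)
          = ιK p k (x - b.sum fun js a => HahnSeries.C a * (ξ js.1) ^ (p ^ js.2)) := by
        rw [sub_pow_expChar_pow, hX, hSc, map_sub]
      rw [mem_Operf_iff p k hpow]
      exact hb
    refine ⟨c, hmem, ?_⟩
    intro c' hc'
    have hdiff : SHom p k ξ (c' - c) ∈ Operf p k := by
      rw [map_sub]
      have : SHom p k ξ c' - SHom p k ξ c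
          = (m - SHom p k ξ c) - (m - SHom p k ξ c') := by ring
      rw [this]
      exact sub_mem_Operf p k hmem hc'
    have := S_mem_imp_zero p k ξ hξ (c' - c) hdiff
    rwa [sub_eq_zero] at this
  · -- (ii) injectivity
    intro n z h
    exact (mem_Operf_iff p k (frI_pow_eq p k n (ιK p k z))).1 h
  · -- (iii) surjectivity
    intro m
    obtain ⟨n, x, hx⟩ := exists_level p k m
    refine ⟨n, x, ?_⟩
    have hm : m = frI p k n (ιK p k x) := by
      apply pow_p_injective p k n
      simp only
      rw [hx, frI_pow_eq]
    rw [← hm, sub_self]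
    exact zero_mem_Operf p k

end
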